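/- Let M, N be symplectic manifolds with symplectic forms ω, σ, let b ∈ M, r ∈ N, let f : M → N be a function, and let φ : M × M × N → M × M × N be a symplectic map (with respect to the product symplectic structure) such that φ(x, b, r) = (x, x, f(x)) for all x ∈ M. Then dim N ≥ dim M. -/

import Mathlib

/-- Minimum size of a classical cloning machine. `M` and `N` carry (possibly varying)
symplectic structures `ω`, `σ` (each `ω x` a nondegenerate alternating bilinear form on
the tangent space, here identified with the model vector space). If
`φ : M × M × N → M × M × N` is a differentiable symplectic map for the product
symplectic structure and `φ (x, b, r) = (x, x, f x)` for all `x`, then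
`dim N ≥ dim M`. -/
theorem cloning_machine_dim_ge
    {M : Type*} [NormedAddCommGroup M] [NormedSpace ℝ M] [FiniteDimensional ℝ M]
    {N : Type*} [NormedAddCommGroup N] [NormedSpace ℝ N] [FiniteDimensional ℝ N]
    (ω : M → M →ₗ[ℝ] M →ₗ[ℝ] ℝ)
    (hωalt : ∀ x : M, ∀ v : M, ω x v v = 0)
    (hωnd : ∀ x : M, ∀ v : M, (∀ w : M, ω x v w = 0) → v = 0)
    (σ : N → N →ₗ[ℝ] N →ₗ[ℝ] ℝ)
    (hσalt : ∀ y : N, ∀ v : N, σ y v v = 0)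
    (hσnd : ∀ y : N, ∀ v : N, (∀ w : N, σ y v w = 0) → v = 0)
    (b : M) (r : N) (f : M → N)
    (φ : M × M × N → M × M × N)
    (hdiff : Differentiable ℝ φ)
    (hsymp : ∀ p u v : M × M × N,
      ω (φ p).1 (fderiv ℝ φ p u).1 (fderiv ℝ φ p v).1 +
        ω (φ p).2.1 (fderiv ℝ φ p u).2.1 (fderiv ℝ φ p v).2.1 +
        σ (φ p).2.2 (fderiv ℝ φ p u).2.2 (fderiv ℝ φ p v).2.2
      = ω p.1 u.1 v.1 + ω p.2.1 u.2.1 v.2.1 + σ p.2.2 u.2.2 v.2.2)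
    (hclone : ∀ x : M, φ (x, b, r) = (x, x, f x)) :
    Module.finrank ℝ M ≤ Module.finrank ℝ N := by

  classical
  set p : M × M × N := (b, b, r) with hp
  have hfd : Differentiable ℝ f := by
    have hfe : (fun x : M => (φ (x, b, r)).2.2) = f := by
      funext x; rw [hclone]
    rw [← hfe]
    exact (hdiff.comp (differentiable_id.prodMk (differentiable_const (b, r)))).snd.snd
  set F := fderiv ℝ f b with hF
  have hg : HasFDerivAt (fun x : M => (x, b, r))
      ((ContinuousLinearMap.id ℝ M).prod 0) b :=
    (hasFDerivAt_id b).prodMk (hasFDerivAt_const (b, r) b)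
  have hcomp : HasFDerivAt (fun x : M => φ (x, b, r))
      ((fderiv ℝ φ p).comp ((ContinuousLinearMap.id ℝ M).prod 0)) b :=
    ((hdiff p).hasFDerivAt).comp b hg
  have hclone' : (fun x : M => φ (x, b, r)) = fun x => (x, x, f x) := by
    funext x; exact hclone x
  have hcomp2 : HasFDerivAt (fun x : M => (x, x, f x))
      ((ContinuousLinearMap.id ℝ M).prod
        ((ContinuousLinearMap.id ℝ M).prod F)) b :=
    (hasFDerivAt_id b).prodMk ((hasFDerivAt_id b).prodMk (hfd b).hasFDerivAt)
  have heq : (fderiv ℝ φ p).comp ((ContinuousLinearMap.id ℝ M).prod 0)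
      = (ContinuousLinearMap.id ℝ M).prod ((ContinuousLinearMap.id ℝ M).prod F) := by
    have h := hcomp
    rw [hclone'] at h
    exact h.unique hcomp2
  have key : ∀ v : M, fderiv ℝ φ p (v, 0, 0) = (v, v, F v) := by
    intro v
    have h := congrFun (congrArg (fun (L : M →L[ℝ] M × M × N) (x : M) => L x) heq) v
    simp at h; exact h
  have hker : ∀ u : M, F u = 0 → u = 0 := by
    intro u hu
    apply hωnd b u
    intro w
    have h := hsymp p (u, 0, 0) (w, 0, 0)
    rw [key u, key w] at h
    have hφp : φ p = (b, b, f b) := hclone b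
    rw [hφp] at h
    simp only [hu, map_zero, LinearMap.zero_apply, add_zero] at h
    linarith
  have hinj : Function.Injective (F : M →ₗ[ℝ] N) := by
    intro u v huv
    have h := hker (u - v) (by simp only [map_sub]; rw [sub_eq_zero]; exact huv)
    exact sub_eq_zero.mp h
  exact LinearMap.finrank_le_finrank_of_injective hinj
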